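/- Let n ≥ 1, 0 < β < 1, 0 < α < n with α + β < n. Suppose b : ℝⁿ → ℝ satisfies |b(x) − b(y)| ≤ C₀ |x − y|^β for all x, y ∈ ℝⁿ, and that there exist s ∈ [1, ∞) and a constant C₁ such that for every ball B ⊂ ℝⁿ, (|B|⁻¹ ∫_B | b(x) − |B|^{−α/n} M_{α,B} b(x) |^s dx)^{1/s} ≤ C₁ |B|^{β/n}. Then there is a constant C such that for every ball B ⊂ ℝⁿ, ∫_B | b(x) − M_B b(x) | dx ≤ C |B|^{1 + β/n}. -/

import Mathlib

open MeasureTheory Metric Set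
open scoped ENNReal NNReal

/-- The fractional maximal function `M_α f` on `ℝⁿ`:
`M_α f (x) = sup_{B ∋ x} |B|^{α/n - 1} ∫_B |f|`. -/
noncomputable def fracMax (n : ℕ) (α : ℝ) (f : EuclideanSpace ℝ (Fin n) → ℝ)
    (x : EuclideanSpace ℝ (Fin n)) : ℝ≥0∞ :=
  ⨆ (c : EuclideanSpace ℝ (Fin n)) (r : ℝ) (_ : 0 < r) (_ : x ∈ ball c r),
    volume (ball c r) ^ (α / n - 1) * ∫⁻ y in ball c r, (‖f y‖₊ : ℝ≥0∞)

/-- The fractional maximal commutator `M_{α,b} f`: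
`M_{α,b} f (x) = sup_{B ∋ x} |B|^{α/n - 1} ∫_B |b(x) - b(y)| |f(y)| dy`. -/
noncomputable def fracMaxComm (n : ℕ) (α : ℝ) (b f : EuclideanSpace ℝ (Fin n) → ℝ)
    (x : EuclideanSpace ℝ (Fin n)) : ℝ≥0∞ :=
  ⨆ (c : EuclideanSpace ℝ (Fin n)) (r : ℝ) (_ : 0 < r) (_ : x ∈ ball c r),
    volume (ball c r) ^ (α / n - 1) *
      ∫⁻ y in ball c r, (‖b x - b y‖₊ : ℝ≥0∞) * (‖f y‖₊ : ℝ≥0∞)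

/-- The local fractional maximal function `M_{α,B₀} f`, supremum over balls `B` with
`x ∈ B ⊆ B₀`. For `α = 0` this is the local Hardy–Littlewood maximal function `M_{B₀}`. -/
noncomputable def fracMaxLocal (n : ℕ) (α : ℝ) (B₀ : Set (EuclideanSpace ℝ (Fin n)))
    (f : EuclideanSpace ℝ (Fin n) → ℝ) (x : EuclideanSpace ℝ (Fin n)) : ℝ≥0∞ :=
  ⨆ (c : EuclideanSpace ℝ (Fin n)) (r : ℝ) (_ : 0 < r) (_ : x ∈ ball c r)
    (_ : ball c r ⊆ B₀),
    volume (ball c r) ^ (α / n - 1) * ∫⁻ y in ball c r, (‖f y‖₊ : ℝ≥0∞)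

/-- The average `b_B = |B|⁻¹ ∫_B b` of `b` over the ball `B = ball c r`. -/
noncomputable def ballAvg (n : ℕ) (b : EuclideanSpace ℝ (Fin n) → ℝ)
    (c : EuclideanSpace ℝ (Fin n)) (r : ℝ) : ℝ :=
  (volume (ball c r)).toReal⁻¹ * ∫ y in ball c r, b y

/-- if `b ∈ Λ̇_β` with constant `C₀` and for some `s ∈ [1, ∞)` one has
`(|B|⁻¹ ∫_B |b(x) - |B|^{-α/n} M_{α,B} b(x)|^s dx)^{1/s} ≤ C₁ |B|^{β/n}` for every ball,
then `∫_B |b(x) - M_B b(x)| dx ≤ C |B|^{1 + β/n}` for every ball `B`. -/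
private lemma cont_of_holder {n : ℕ} {b : EuclideanSpace ℝ (Fin n) → ℝ} {C₀ β : ℝ}
    (hC₀ : 0 ≤ C₀) (hβ0 : 0 < β)
    (hb : ∀ x y, |b x - b y| ≤ C₀ * ‖x - y‖ ^ β) : Continuous b := by
  have h : HolderWith C₀.toNNReal ⟨β, hβ0.le⟩ b := by
    intro x y
    rw [edist_dist, edist_dist, Real.dist_eq, dist_eq_norm]
    calc ENNReal.ofReal |b x - b y| ≤ ENNReal.ofReal (C₀ * ‖x - y‖ ^ β) :=
        ENNReal.ofReal_le_ofReal (hb x y)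
      _ = _ := by
        rw [ENNReal.ofReal_mul hC₀, ← ENNReal.ofReal_rpow_of_nonneg (norm_nonneg _) hβ0.le]
        rfl
  exact h.continuous (by exact_mod_cast hβ0)

private lemma fracMaxLocal_lsc (n : ℕ) (α : ℝ) (B₀ : Set (EuclideanSpace ℝ (Fin n)))
    (f : EuclideanSpace ℝ (Fin n) → ℝ) :
    LowerSemicontinuous (fracMaxLocal n α B₀ f) := by
  intro x t ht
  simp only [fracMaxLocal, lt_iSup_iff] at ht
  obtain ⟨c, r, hr, hx, hsub, ht⟩ := ht
  filter_upwards [isOpen_ball.mem_nhds hx] with y hy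
  exact ht.trans_le <| le_iSup_of_le c <| le_iSup_of_le r <| le_iSup_of_le hr <|
    le_iSup_of_le hy <| le_iSup_of_le hsub le_rfl

private lemma le_fracMaxLocal {n : ℕ} {α : ℝ} {B₀ : Set (EuclideanSpace ℝ (Fin n))}
    {f : EuclideanSpace ℝ (Fin n) → ℝ} {x c : EuclideanSpace ℝ (Fin n)} {r : ℝ}
    (hr : 0 < r) (hx : x ∈ ball c r) (hsub : ball c r ⊆ B₀) :
    volume (ball c r) ^ (α / n - 1) * (∫⁻ y in ball c r, (‖f y‖₊ : ℝ≥0∞)) ≤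
      fracMaxLocal n α B₀ f x :=
  le_iSup_of_le c <| le_iSup_of_le r <| le_iSup_of_le hr <| le_iSup_of_le hx <|
    le_iSup_of_le hsub le_rfl

private lemma fracMaxLocal_bounds {n : ℕ} {α' β C₀ : ℝ}
    (hα' : 0 ≤ α') (hβ0 : 0 < β) (hC₀ : 0 ≤ C₀)
    {b : EuclideanSpace ℝ (Fin n) → ℝ}
    (hb : ∀ x y, |b x - b y| ≤ C₀ * ‖x - y‖ ^ β)
    (c : EuclideanSpace ℝ (Fin n)) {r : ℝ} (hr : 0 < r)
    {x : EuclideanSpace ℝ (Fin n)} (hx : x ∈ ball c r) :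
    (volume (ball c r)).toReal ^ (α' / n) * (|b x| - C₀ * (2 * r) ^ β) ≤
        (fracMaxLocal n α' (ball c r) b x).toReal ∧
      (fracMaxLocal n α' (ball c r) b x).toReal ≤
        (volume (ball c r)).toReal ^ (α' / n) * (|b x| + C₀ * (2 * r) ^ β) := by
  set K := C₀ * (2 * r) ^ β with hKdef
  have hK : 0 ≤ K := by positivity
  have hVne : volume (ball c r) ≠ 0 := (measure_ball_pos _ c hr).ne'
  have hVtop : volume (ball c r) ≠ ⊤ := measure_ball_lt_top.ne
  set Vr := (volume (ball c r)).toReal with hVrdef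
  have hVr : 0 < Vr := ENNReal.toReal_pos hVne hVtop
  -- pointwise bounds on |b y| for y in the ball
  have hdist : ∀ y ∈ ball c r, |b x| - K ≤ |b y| ∧ |b y| ≤ |b x| + K := by
    intro y hy
    have hxy : ‖x - y‖ ^ β ≤ (2 * r) ^ β := by
      apply Real.rpow_le_rpow (norm_nonneg _) _ hβ0.le
      rw [← dist_eq_norm]
      calc dist x y ≤ dist x c + dist c y := dist_triangle _ _ _
        _ ≤ r + r := by
            have h1 := mem_ball.1 hx
            have h2 := mem_ball.1 hy
            rw [dist_comm c y] at *
            linarith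
        _ = 2 * r := by ring
    have h1 : |b x - b y| ≤ K := (hb x y).trans (mul_le_mul_of_nonneg_left hxy hC₀)
    constructor
    · have h2 := abs_sub_abs_le_abs_sub (b x) (b y)
      linarith
    · have h2 := abs_sub_abs_le_abs_sub (b y) (b x)
      rw [abs_sub_comm] at h2
      linarith
  have hbK : 0 ≤ |b x| + K := by positivity
  -- upper bound
  have hup : fracMaxLocal n α' (ball c r) b x ≤
      ENNReal.ofReal (Vr ^ (α' / n) * (|b x| + K)) := by
    refine iSup_le fun c' => iSup_le fun r' => iSup_le fun hr' => iSup_le fun hx' =>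
      iSup_le fun hsub => ?_
    have hV'0 : volume (ball c' r') ≠ 0 := (measure_ball_pos _ c' hr').ne'
    have hV't : volume (ball c' r') ≠ ⊤ := measure_ball_lt_top.ne
    have hint : (∫⁻ y in ball c' r', (‖b y‖₊ : ℝ≥0∞)) ≤
        volume (ball c' r') * ENNReal.ofReal (|b x| + K) := by
      calc (∫⁻ y in ball c' r', (‖b y‖₊ : ℝ≥0∞))
          ≤ ∫⁻ _ in ball c' r', ENNReal.ofReal (|b x| + K) := by
            refine setLIntegral_mono measurable_const fun y hy => ?_
            rw [← enorm_eq_nnnorm, ← ofReal_norm, Real.norm_eq_abs]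
            exact ENNReal.ofReal_le_ofReal (hdist y (hsub hy)).2
        _ = volume (ball c' r') * ENNReal.ofReal (|b x| + K) := by
            rw [setLIntegral_const, mul_comm]
    calc volume (ball c' r') ^ (α' / n - 1) * ∫⁻ y in ball c' r', (‖b y‖₊ : ℝ≥0∞)
        ≤ volume (ball c' r') ^ (α' / n - 1) *
            (volume (ball c' r') * ENNReal.ofReal (|b x| + K)) :=
          mul_le_mul_right hint _
      _ = volume (ball c' r') ^ (α' / n) * ENNReal.ofReal (|b x| + K) := by
          rw [← mul_assoc]
          congr 1
          calc volume (ball c' r') ^ (α' / (n:ℝ) - 1) * volume (ball c' r')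
              = volume (ball c' r') ^ (α' / (n:ℝ) - 1) * volume (ball c' r') ^ (1:ℝ) := by
                rw [ENNReal.rpow_one]
            _ = volume (ball c' r') ^ (α' / (n:ℝ) - 1 + 1) :=
                (ENNReal.rpow_add _ _ hV'0 hV't).symm
            _ = volume (ball c' r') ^ (α' / (n:ℝ)) := by congr 1; ring
      _ ≤ volume (ball c r) ^ (α' / n) * ENNReal.ofReal (|b x| + K) :=
          mul_le_mul_left (ENNReal.rpow_le_rpow (measure_mono hsub) (by positivity)) _
      _ = ENNReal.ofReal (Vr ^ (α' / n) * (|b x| + K)) := by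
          rw [ENNReal.ofReal_mul (by positivity), ← ENNReal.ofReal_rpow_of_pos hVr,
            hVrdef, ENNReal.ofReal_toReal hVtop]
  have hne : fracMaxLocal n α' (ball c r) b x ≠ ⊤ := (hup.trans_lt ENNReal.ofReal_lt_top).ne
  constructor
  · -- lower bound
    have hcont : Continuous b := cont_of_holder hC₀ hβ0 hb
    have hbint : IntegrableOn b (ball c r) volume := by
      refine Integrable.mono' (g := fun _ => |b x| + K)
        (integrableOn_const (C := |b x| + K) measure_ball_lt_top.ne)
        hcont.aestronglyMeasurable.restrict ?_
      filter_upwards [ae_restrict_mem measurableSet_ball] with y hy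
      rw [Real.norm_eq_abs]
      exact (hdist y hy).2
    have hL : (∫⁻ y in ball c r, (‖b y‖₊ : ℝ≥0∞)) =
        ENNReal.ofReal (∫ y in ball c r, |b y|) := by
      simp_rw [← enorm_eq_nnnorm]
      rw [← ofReal_integral_norm_eq_lintegral_enorm hbint]
      simp_rw [Real.norm_eq_abs]
    have hIb : (|b x| - K) * Vr ≤ ∫ y in ball c r, |b y| := by
      have h3 : ∫ _ in ball c r, (|b x| - K) ∂volume ≤ ∫ y in ball c r, |b y| :=
        setIntegral_mono_on (integrableOn_const (C := |b x| - K)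
          measure_ball_lt_top.ne) hbint.abs measurableSet_ball
          (fun y hy => (hdist y hy).1)
      rwa [setIntegral_const, smul_eq_mul, mul_comm] at h3
    have hlow := le_fracMaxLocal (α := α') (f := b) hr hx (subset_refl _)
    have hInonneg : 0 ≤ ∫ y in ball c r, |b y| := integral_nonneg fun y => abs_nonneg _
    calc Vr ^ (α' / n) * (|b x| - K)
        = Vr ^ (α' / n - 1) * ((|b x| - K) * Vr) := by
          have hpow : Vr ^ (α' / (n:ℝ) - 1) * Vr = Vr ^ (α' / (n:ℝ)) := by
            calc Vr ^ (α' / (n:ℝ) - 1) * Vr = Vr ^ (α' / (n:ℝ) - 1) * Vr ^ (1:ℝ) := by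
                  rw [Real.rpow_one]
              _ = Vr ^ (α' / (n:ℝ) - 1 + 1) := (Real.rpow_add hVr _ _).symm
              _ = Vr ^ (α' / (n:ℝ)) := by congr 1; ring
          rw [← hpow]; ring
      _ ≤ Vr ^ (α' / n - 1) * ∫ y in ball c r, |b y| :=
          mul_le_mul_of_nonneg_left hIb (Real.rpow_nonneg hVr.le _)
      _ = (volume (ball c r) ^ (α' / n - 1) * ∫⁻ y in ball c r, (‖b y‖₊ : ℝ≥0∞)).toReal := by
          rw [ENNReal.toReal_mul, ← ENNReal.toReal_rpow, hL, ENNReal.toReal_ofReal hInonneg]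
      _ ≤ (fracMaxLocal n α' (ball c r) b x).toReal := ENNReal.toReal_mono hne hlow
  · -- upper bound, toReal
    calc (fracMaxLocal n α' (ball c r) b x).toReal
        ≤ (ENNReal.ofReal (Vr ^ (α' / n) * (|b x| + K))).toReal :=
          ENNReal.toReal_mono ENNReal.ofReal_ne_top hup
      _ = Vr ^ (α' / n) * (|b x| + K) := ENNReal.toReal_ofReal (by positivity)

private lemma holder_avg {X : Type*} [MeasurableSpace X] (μ : Measure X) [IsFiniteMeasure μ]
    {h : X → ℝ} {s : ℝ} (hs : 1 ≤ s)
    (hm : AEStronglyMeasurable h μ) (h1 : Integrable h μ)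
    (hbs : Integrable (fun x => |h x| ^ s) μ) :
    ∫ x, |h x| ∂μ ≤ (μ Set.univ).toReal ^ (1 - 1 / s) * (∫ x, |h x| ^ s ∂μ) ^ (1 / s) := by
  have hs0 : (0:ℝ) < s := lt_of_lt_of_le one_pos hs
  have key := eLpNorm'_le_eLpNorm'_mul_rpow_measure_univ (p := 1) (q := s) one_pos hs hm
  simp only [eLpNorm'] at key
  have hB : (∫⁻ a, (‖h a‖₊ : ℝ≥0∞) ^ s ∂μ) = ENNReal.ofReal (∫ x, |h x| ^ s ∂μ) := by
    have hptw : ∀ a, ((‖h a‖₊ : ℝ≥0∞)) ^ s = ENNReal.ofReal (|h a| ^ s) := fun a => by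
      rw [← enorm_eq_nnnorm, ← ofReal_norm, Real.norm_eq_abs,
        ENNReal.ofReal_rpow_of_nonneg (abs_nonneg _) hs0.le]
    rw [lintegral_congr hptw, ← ofReal_integral_eq_lintegral_ofReal hbs
      (ae_of_all _ fun a => by positivity)]
  have hA : (∫⁻ a, (‖h a‖₊ : ℝ≥0∞) ^ (1:ℝ) ∂μ) = ENNReal.ofReal (∫ x, |h x| ∂μ) := by
    simp_rw [ENNReal.rpow_one]
    simp_rw [← enorm_eq_nnnorm]
    rw [← ofReal_integral_norm_eq_lintegral_enorm h1]
    simp_rw [Real.norm_eq_abs]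
  simp only [enorm_eq_nnnorm] at key
  rw [hA, hB] at key
  have hIs : 0 ≤ ∫ x, |h x| ^ s ∂μ := integral_nonneg fun x => by positivity
  have hI1 : 0 ≤ ∫ x, |h x| ∂μ := integral_nonneg fun x => abs_nonneg _
  have hexp : (0:ℝ) ≤ 1/1 - 1/s := by
    have h2 : 1/s ≤ 1/1 := one_div_le_one_div_of_le one_pos hs
    linarith
  have hfin : ENNReal.ofReal (∫ x, |h x| ^ s ∂μ) ^ (1 / s) * μ Set.univ ^ (1 / 1 - 1 / s) ≠ ⊤ :=
    ENNReal.mul_ne_top (ENNReal.rpow_ne_top_of_nonneg (by positivity) ENNReal.ofReal_ne_top)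
      (ENNReal.rpow_ne_top_of_nonneg hexp (measure_ne_top _ _))
  have hmono := ENNReal.toReal_mono hfin key
  rw [show (1:ℝ)/1 = 1 by norm_num] at hmono
  rw [ENNReal.rpow_one, ENNReal.toReal_ofReal hI1, ENNReal.toReal_mul,
    ← ENNReal.toReal_rpow, ← ENNReal.toReal_rpow, ENNReal.toReal_ofReal hIs] at hmono
  rw [mul_comm] at hmono
  exact hmono

theorem stmt12 (n : ℕ) (hn : 1 ≤ n) (α β : ℝ) (hβ0 : 0 < β) (hβ1 : β < 1)
    (hα0 : 0 < α) (hαn : α < n) (hαβn : α + β < n)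
    (b : EuclideanSpace ℝ (Fin n) → ℝ) (C₀ : ℝ)
    (hb : ∀ x y, |b x - b y| ≤ C₀ * ‖x - y‖ ^ β)
    (s : ℝ) (hs : 1 ≤ s) (C₁ : ℝ)
    (hC₁ : ∀ (c : EuclideanSpace ℝ (Fin n)) (r : ℝ), 0 < r →
      ((volume (ball c r)).toReal⁻¹ *
          ∫ x in ball c r,
            |b x - (volume (ball c r)).toReal ^ (-(α / n)) *
              (fracMaxLocal n α (ball c r) b x).toReal| ^ s) ^ (1 / s) ≤
        C₁ * (volume (ball c r)).toReal ^ (β / n)) :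
    ∃ C : ℝ, ∀ (c : EuclideanSpace ℝ (Fin n)) (r : ℝ), 0 < r →
      (∫ x in ball c r,
          |b x - (fracMaxLocal n 0 (ball c r) b x).toReal|) ≤
        C * (volume (ball c r)).toReal ^ (1 + β / n) := by
  have i0 : Fin n := ⟨0, hn⟩
  have hC₀ : 0 ≤ C₀ := by
    have h2 := hb 0 (EuclideanSpace.single i0 1)
    have h3 : ‖(0 : EuclideanSpace ℝ (Fin n)) - EuclideanSpace.single i0 (1:ℝ)‖ = 1 := by
      rw [zero_sub, norm_neg, EuclideanSpace.norm_single]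
      norm_num
    rw [h3, Real.one_rpow, mul_one] at h2
    exact le_trans (abs_nonneg _) h2
  haveI : Nontrivial (EuclideanSpace ℝ (Fin n)) := by
    refine nontrivial_of_ne (EuclideanSpace.single i0 (1:ℝ)) 0 fun hcon => ?_
    have h4 := congrArg (fun w => ‖w‖) hcon
    simp only [EuclideanSpace.norm_single, norm_zero, norm_one] at h4
    exact one_ne_zero h4
  have hcont : Continuous b := cont_of_holder hC₀ hβ0 hb
  have hn' : (0:ℝ) < n := by exact_mod_cast Nat.lt_of_lt_of_le Nat.zero_lt_one hn
  have hs0 : (0:ℝ) < s := lt_of_lt_of_le one_pos hs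
  set v := (volume (ball (0:EuclideanSpace ℝ (Fin n)) 1)).toReal with hvdef
  have hv : 0 < v :=
    ENNReal.toReal_pos (measure_ball_pos _ _ one_pos).ne' measure_ball_lt_top.ne
  refine ⟨C₁ + 2 * (C₀ * 2 ^ β / v ^ (β / n)), fun c r hr => ?_⟩
  have hVne : volume (ball c r) ≠ 0 := (measure_ball_pos _ c hr).ne'
  have hVtop : volume (ball c r) ≠ ⊤ := measure_ball_lt_top.ne
  have hg1 := hC₁ c r hr
  set Vr := (volume (ball c r)).toReal with hVrdef
  have hVr : 0 < Vr := ENNReal.toReal_pos hVne hVtop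
  set K := C₀ * (2 * r) ^ β with hKdef
  have hK : 0 ≤ K := by positivity
  -- bounds on the α-maximal expression
  have hEb : ∀ x ∈ ball c r,
      |b x| - K ≤ Vr ^ (-(α / n)) * (fracMaxLocal n α (ball c r) b x).toReal ∧
      Vr ^ (-(α / n)) * (fracMaxLocal n α (ball c r) b x).toReal ≤ |b x| + K := by
    intro x hx
    obtain ⟨hl, hu⟩ := fracMaxLocal_bounds hα0.le hβ0 hC₀ hb c hr hx
    have hcancel : Vr ^ (-(α / (n:ℝ))) * Vr ^ (α / (n:ℝ)) = 1 := by
      rw [← Real.rpow_add hVr]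
      norm_num
    constructor
    · calc |b x| - K = (Vr ^ (-(α/(n:ℝ))) * Vr ^ (α/(n:ℝ))) * (|b x| - K) := by
            rw [hcancel]; ring
        _ = Vr ^ (-(α/(n:ℝ))) * (Vr ^ (α/(n:ℝ)) * (|b x| - K)) := by ring
        _ ≤ Vr ^ (-(α/(n:ℝ))) * (fracMaxLocal n α (ball c r) b x).toReal :=
          mul_le_mul_of_nonneg_left hl (Real.rpow_nonneg hVr.le _)
    · calc Vr ^ (-(α/(n:ℝ))) * (fracMaxLocal n α (ball c r) b x).toReal
          ≤ Vr ^ (-(α/(n:ℝ))) * (Vr ^ (α/(n:ℝ)) * (|b x| + K)) :=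
            mul_le_mul_of_nonneg_left hu (Real.rpow_nonneg hVr.le _)
        _ = (Vr ^ (-(α/(n:ℝ))) * Vr ^ (α/(n:ℝ))) * (|b x| + K) := by ring
        _ = |b x| + K := by rw [hcancel, one_mul]
  -- bounds on the 0-maximal expression
  have hMb : ∀ x ∈ ball c r,
      |b x| - K ≤ (fracMaxLocal n 0 (ball c r) b x).toReal ∧
      (fracMaxLocal n 0 (ball c r) b x).toReal ≤ |b x| + K := by
    intro x hx
    obtain ⟨hl, hu⟩ := fracMaxLocal_bounds le_rfl hβ0 hC₀ hb c hr hx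
    rw [zero_div, Real.rpow_zero, one_mul] at hl hu
    exact ⟨hl, hu⟩
  have hh0 : ∀ x : EuclideanSpace ℝ (Fin n), (0:ℝ) ≤ max (|b x| - b x - K) 0 :=
    fun x => le_max_right _ _
  -- h ≤ g on the ball
  have hhg : ∀ x ∈ ball c r, max (|b x| - b x - K) 0 ≤
      |b x - Vr ^ (-(α / n)) * (fracMaxLocal n α (ball c r) b x).toReal| := by
    intro x hx
    refine max_le ?_ (abs_nonneg _)
    have h5 := (hEb x hx).1
    calc |b x| - b x - K
        ≤ Vr ^ (-(α / n)) * (fracMaxLocal n α (ball c r) b x).toReal - b x := by linarith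
      _ ≤ |Vr ^ (-(α / n)) * (fracMaxLocal n α (ball c r) b x).toReal - b x| := le_abs_self _
      _ = |b x - Vr ^ (-(α / n)) * (fracMaxLocal n α (ball c r) b x).toReal| := abs_sub_comm _ _
  -- main pointwise bound
  have hmain : ∀ x ∈ ball c r,
      |b x - (fracMaxLocal n 0 (ball c r) b x).toReal| ≤ max (|b x| - b x - K) 0 + 2 * K := by
    intro x hx
    obtain ⟨hl, hu⟩ := hMb x hx
    have habs : 0 ≤ |b x| - b x := sub_nonneg.2 (le_abs_self _)
    have h1 : |b x| - b x - K ≤ max (|b x| - b x - K) 0 := le_max_left _ _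
    refine abs_le.2 ⟨by linarith, by linarith [hh0 x]⟩
  -- measurability
  have hFm : Measurable fun x => (fracMaxLocal n α (ball c r) b x).toReal :=
    (fracMaxLocal_lsc n α (ball c r) b).measurable.ennreal_toReal
  have hgm : Measurable fun x =>
      |b x - Vr ^ (-(α / n)) * (fracMaxLocal n α (ball c r) b x).toReal| :=
    (hcont.measurable.sub (measurable_const.mul hFm)).abs
  have hhm : Measurable fun x : EuclideanSpace ℝ (Fin n) => max (|b x| - b x - K) 0 :=
    (((hcont.measurable.abs.sub hcont.measurable).sub measurable_const).max measurable_const)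
  -- boundedness
  have hDb : ∀ x ∈ ball c r, |b x| ≤ |b c| + K := by
    intro x hx
    have h2 := hb c x
    have h3 : ‖c - x‖ ^ β ≤ (2*r) ^ β := by
      apply Real.rpow_le_rpow (norm_nonneg _) _ hβ0.le
      rw [← dist_eq_norm, dist_comm]
      have h6 := mem_ball.1 hx
      linarith
    have h4 : |b c - b x| ≤ K := h2.trans (mul_le_mul_of_nonneg_left h3 hC₀)
    have h5 := abs_sub_abs_le_abs_sub (b x) (b c)
    rw [abs_sub_comm] at h5
    linarith
  set D := 2 * (|b c| + K) + K with hDdef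
  have hD0 : (0:ℝ) ≤ D := by positivity
  have hgD : ∀ x ∈ ball c r,
      |b x - Vr ^ (-(α / n)) * (fracMaxLocal n α (ball c r) b x).toReal| ≤ D := by
    intro x hx
    obtain ⟨hl, hu⟩ := hEb x hx
    have h5 := hDb x hx
    have h6 : |Vr ^ (-(α / n)) * (fracMaxLocal n α (ball c r) b x).toReal| ≤ |b x| + K :=
      abs_le.2 ⟨by linarith [abs_nonneg (b x)], hu⟩
    calc |b x - Vr ^ (-(α / n)) * (fracMaxLocal n α (ball c r) b x).toReal|
        ≤ |b x| + |Vr ^ (-(α / n)) * (fracMaxLocal n α (ball c r) b x).toReal| := abs_sub _ _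
      _ ≤ D := by rw [hDdef]; linarith
  have hhD : ∀ x ∈ ball c r, max (|b x| - b x - K) 0 ≤ D := by
    intro x hx
    have h5 := hDb x hx
    refine max_le ?_ hD0
    have := neg_abs_le (b x)
    rw [hDdef]; linarith
  -- integrability helper
  have hIg : ∀ (F : EuclideanSpace ℝ (Fin n) → ℝ), Measurable F → ∀ M : ℝ,
      (∀ x ∈ ball c r, ‖F x‖ ≤ M) → IntegrableOn F (ball c r) volume := by
    intro F hFm' M hM
    refine Integrable.mono' (integrableOn_const (C := M) measure_ball_lt_top.ne)
      hFm'.aestronglyMeasurable.restrict ?_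
    filter_upwards [ae_restrict_mem measurableSet_ball] with y hy using hM y hy
  have hInth : IntegrableOn (fun x => max (|b x| - b x - K) 0) (ball c r) volume :=
    hIg _ hhm D fun x hx => by
      rw [Real.norm_eq_abs, abs_of_nonneg (hh0 x)]; exact hhD x hx
  have hInths : IntegrableOn (fun x => |max (|b x| - b x - K) 0| ^ s) (ball c r) volume := by
    refine hIg _ ((Real.continuous_rpow_const hs0.le).measurable.comp hhm.abs) (D ^ s)
      fun x hx => ?_
    rw [Real.norm_eq_abs, abs_of_nonneg (by positivity)]
    exact Real.rpow_le_rpow (abs_nonneg _) (by rw [abs_of_nonneg (hh0 x)]; exact hhD x hx) hs0.le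
  have hIntgs : IntegrableOn (fun x =>
      |b x - Vr ^ (-(α / n)) * (fracMaxLocal n α (ball c r) b x).toReal| ^ s)
      (ball c r) volume := by
    refine hIg _ ((Real.continuous_rpow_const hs0.le).measurable.comp hgm) (D ^ s) fun x hx => ?_
    rw [Real.norm_eq_abs, abs_of_nonneg (by positivity)]
    exact Real.rpow_le_rpow (abs_nonneg _) (hgD x hx) hs0.le
  haveI : IsFiniteMeasure (volume.restrict (ball c r)) :=
    ⟨by rw [Measure.restrict_apply_univ]; exact measure_ball_lt_top⟩
  have hI0 : 0 ≤ ∫ x in ball c r,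
      |b x - Vr ^ (-(α / n)) * (fracMaxLocal n α (ball c r) b x).toReal| ^ s :=
    integral_nonneg fun x => by positivity
  -- volume identity
  have hVrval : Vr = r ^ (n:ℕ) * v := by
    rw [hVrdef, Measure.addHaar_ball _ _ hr.le, finrank_euclideanSpace_fin,
      ENNReal.toReal_mul, ENNReal.toReal_ofReal (by positivity)]
  have hrβ : r ^ β * v ^ (β / (n:ℝ)) = Vr ^ (β / (n:ℝ)) := by
    rw [hVrval, Real.mul_rpow (by positivity) hv.le, ← Real.rpow_natCast r n,
      ← Real.rpow_mul hr.le]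
    congr 2
    field_simp
  have hV1 : Vr * Vr ^ (β/(n:ℝ)) = Vr ^ (1 + β/(n:ℝ)) := by
    rw [Real.rpow_add hVr, Real.rpow_one]
  have hKv : K * Vr = (C₀ * 2^β / v^(β/(n:ℝ))) * Vr ^ (1 + β/(n:ℝ)) := by
    rw [hKdef, show (2:ℝ) * r = 2 * r by rfl, Real.mul_rpow (by norm_num) hr.le, ← hV1, ← hrβ]
    field_simp
  calc (∫ x in ball c r, |b x - (fracMaxLocal n 0 (ball c r) b x).toReal|)
      ≤ ∫ x in ball c r, (max (|b x| - b x - K) 0 + 2 * K) := by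
        refine integral_mono_of_nonneg (ae_of_all _ fun x => abs_nonneg _)
          (hInth.add (integrableOn_const (C := 2 * K) measure_ball_lt_top.ne)) ?_
        filter_upwards [ae_restrict_mem measurableSet_ball] with x hx using hmain x hx
    _ = (∫ x in ball c r, max (|b x| - b x - K) 0) + 2 * K * Vr := by
        rw [integral_add hInth (integrableOn_const (C := 2 * K)
          measure_ball_lt_top.ne), setIntegral_const, smul_eq_mul, measureReal_def, ← hVrdef]
        ring
    _ ≤ Vr ^ (1 - 1/s) * (∫ x in ball c r, |max (|b x| - b x - K) 0| ^ s) ^ (1/s)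
          + 2 * K * Vr := by
        have h7 := holder_avg (μ := volume.restrict (ball c r)) hs
          hhm.aestronglyMeasurable.restrict hInth hInths
        rw [Measure.restrict_apply_univ] at h7
        have heq : (∫ x in ball c r, max (|b x| - b x - K) 0)
            = ∫ x in ball c r, |max (|b x| - b x - K) 0| := by
          exact integral_congr_ae (ae_of_all _ fun x => (abs_of_nonneg (hh0 x)).symm)
        rw [heq]
        exact add_le_add_left h7 _
    _ ≤ Vr ^ (1 - 1/s) * (∫ x in ball c r,
          |b x - Vr ^ (-(α / n)) * (fracMaxLocal n α (ball c r) b x).toReal| ^ s) ^ (1/s)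
          + 2 * K * Vr := by
        have hint : (∫ x in ball c r, |max (|b x| - b x - K) 0| ^ s)
            ≤ ∫ x in ball c r,
              |b x - Vr ^ (-(α / n)) * (fracMaxLocal n α (ball c r) b x).toReal| ^ s := by
          refine integral_mono_of_nonneg (ae_of_all _ fun x => by positivity) hIntgs ?_
          filter_upwards [ae_restrict_mem measurableSet_ball] with x hx
          refine Real.rpow_le_rpow (abs_nonneg _) ?_ hs0.le
          rw [abs_of_nonneg (hh0 x)]
          exact hhg x hx
        have h8 := Real.rpow_le_rpow (integral_nonneg fun x => by positivity) hint
          (by positivity : (0:ℝ) ≤ 1/s)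
        exact add_le_add_left (mul_le_mul_of_nonneg_left h8 (Real.rpow_nonneg hVr.le _)) _
    _ ≤ Vr * (C₁ * Vr ^ (β/(n:ℝ))) + 2 * K * Vr := by
        have key : Vr ^ (1 - 1/s) * (∫ x in ball c r,
            |b x - Vr ^ (-(α / n)) * (fracMaxLocal n α (ball c r) b x).toReal| ^ s) ^ (1/s)
            = Vr * (Vr⁻¹ * ∫ x in ball c r,
            |b x - Vr ^ (-(α / n)) * (fracMaxLocal n α (ball c r) b x).toReal| ^ s) ^ (1/s) := by
          have e1 : Vr ^ (1 - 1/s) = Vr * Vr ^ (-(1/s)) := by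
            rw [show (1:ℝ) - 1/s = 1 + -(1/s) by ring, Real.rpow_add hVr, Real.rpow_one]
          have e2 : (Vr⁻¹ * ∫ x in ball c r,
              |b x - Vr ^ (-(α / n)) * (fracMaxLocal n α (ball c r) b x).toReal| ^ s) ^ (1/s)
              = Vr ^ (-(1/s)) * (∫ x in ball c r,
              |b x - Vr ^ (-(α / n)) * (fracMaxLocal n α (ball c r) b x).toReal| ^ s) ^ (1/s) := by
            rw [Real.mul_rpow (inv_nonneg.2 hVr.le) hI0, Real.inv_rpow hVr.le,
              ← Real.rpow_neg hVr.le]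
          rw [e1, e2]
          ring
        rw [key]
        exact add_le_add_left (mul_le_mul_of_nonneg_left hg1 hVr.le) _
    _ = (C₁ + 2 * (C₀ * 2 ^ β / v ^ (β / n))) * Vr ^ (1 + β/(n:ℝ)) := by
        calc Vr * (C₁ * Vr ^ (β/(n:ℝ))) + 2 * K * Vr
            = C₁ * (Vr * Vr ^ (β/(n:ℝ))) + 2 * (K * Vr) := by ring
          _ = _ := by rw [hV1, hKv]; ring
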